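/- Let G be a strongly connected directed multigraph with at least one edge. Then the cycle polytope P(G) = conv{ e_C : C simple cycle of G }, where (e_C)_e = (occurrences of e in C)/|C|, has dimension |E(G)| − |V(G)|. -/

import Mathlib

open Filter Finset

variable {V E : Type*}

/-- A (non-empty) closed directed walk in the directed multigraph with edge-source map `src`
and edge-target map `tgt`: a nonempty list of edges in which the target of each edge is the
source of the next, and the target of the last edge is the source of the first. -/
def IsCycleWalk (src tgt : E → V) (c : List E) : Prop :=
  c ≠ [] ∧ c.Chain' (fun a b => tgt a = src b) ∧ c.getLast?.map tgt = c.head?.map src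

/-- A simple cycle: a closed directed walk that does not repeat vertices. -/
def IsSimpleCycle (src tgt : E → V) (c : List E) : Prop :=
  IsCycleWalk src tgt c ∧ (c.map src).Nodup

/-- The normalized incidence vector `e_C` of a cycle `C`:
its coordinate at an edge `e` is (number of occurrences of `e` in `C`)/|C|. -/
noncomputable def cycleVec [DecidableEq E] (c : List E) : E → ℝ :=
  fun e => (c.count e : ℝ) / (c.length : ℝ)

/-- The cycle polytope of a directed multigraph: the convex hull of the normalized incidence
vectors of its simple cycles. -/
noncomputable def cyclePolytope [DecidableEq E] (src tgt : E → V) : Set (E → ℝ) :=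
  convexHull ℝ { x | ∃ c, IsSimpleCycle src tgt c ∧ x = cycleVec c }

section Walk
variable (src tgt : E → V)

/-- Directed walks as lists of edges. -/
inductive IsWalkA : V → List E → V → Prop where
  | nil (u : V) : IsWalkA u [] u
  | cons {u v : V} {e : E} {l : List E} (h : src e = u) (hw : IsWalkA (tgt e) l v) :
      IsWalkA u (e :: l) v

variable {src tgt}

lemma IsWalkA.append {u w v : V} {l₁ l₂ : List E} (h₁ : IsWalkA src tgt u l₁ w)
    (h₂ : IsWalkA src tgt w l₂ v) : IsWalkA src tgt u (l₁ ++ l₂) v := by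
  induction h₁ with
  | nil => simpa
  | cons h hw ih => exact .cons h (ih h₂)

lemma IsWalkA.split {u v : V} {l₁ l₂ : List E} (h : IsWalkA src tgt u (l₁ ++ l₂) v) :
    ∃ w, IsWalkA src tgt u l₁ w ∧ IsWalkA src tgt w l₂ v := by
  induction l₁ generalizing u with
  | nil => exact ⟨u, .nil u, by simpa using h⟩
  | cons e t ih =>
    rcases h with _ | ⟨hsrc, hw⟩
    obtain ⟨w, h1, h2⟩ := ih hw
    exact ⟨w, .cons hsrc h1, h2⟩

lemma exists_walk_of_reflTransGen {u v : V}
    (h : Relation.ReflTransGen (fun a b => ∃ e, src e = a ∧ tgt e = b) u v) :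
    ∃ l, IsWalkA src tgt u l v := by
  induction h with
  | refl => exact ⟨[], .nil u⟩
  | tail _ hb ih =>
    obtain ⟨l, hl⟩ := ih
    obtain ⟨e, he1, he2⟩ := hb
    exact ⟨l ++ [e], hl.append (he2 ▸ IsWalkA.cons he1 (.nil _))⟩

lemma IsWalkA.chain' {u v : V} {l : List E} (h : IsWalkA src tgt u l v) :
    l.Chain' (fun a b => tgt a = src b) := by
  induction h with
  | nil => exact List.isChain_nil
  | cons hsrc hw ih =>
    rcases hw with _ | ⟨hsrc', hw'⟩
    · exact List.isChain_singleton _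
    · exact List.IsChain.cons_cons hsrc'.symm ih

lemma IsWalkA.head_src {u v : V} {e : E} {l : List E} (h : IsWalkA src tgt u (e :: l) v) :
    src e = u := by rcases h with _ | ⟨hsrc, _⟩; exact hsrc

lemma IsWalkA.getLast_tgt {u v : V} {l : List E} (h : IsWalkA src tgt u l v) (hne : l ≠ []) :
    tgt (l.getLast hne) = v := by
  induction h with
  | nil => simp at hne
  | @cons u' v' e l' hsrc hw ih =>
    rcases eq_or_ne l' [] with rfl | hl'
    · cases hw; simp
    · rw [List.getLast_cons hl']
      exact ih hl'

lemma IsWalkA.map_src_eq {u v : V} {l : List E} (h : IsWalkA src tgt u l v) :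
    l.map src = (u :: l.map tgt).dropLast := by
  induction h with
  | nil => simp
  | @cons u' v' e l' hsrc hw ih =>
    cases hw with
    | nil => simp [hsrc]
    | @cons _ _ e' l'' hsrc' hw' =>
      simp only [List.map_cons] at ih ⊢
      rw [List.dropLast_cons_of_ne_nil (by simp), ih, hsrc]

lemma IsWalkA.multiset_eq {u v : V} {l : List E} (h : IsWalkA src tgt u l v) :
    (↑(l.map tgt) : Multiset V) + {u} = (↑(l.map src) : Multiset V) + {v} := by
  induction h with
  | nil => rfl
  | @cons u' v' e l' hsrc hw ih =>
    rw [List.map_cons, List.map_cons, ← Multiset.cons_coe, ← Multiset.cons_coe,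
      ← Multiset.singleton_add, ← Multiset.singleton_add, ← hsrc]
    calc ({tgt e} : Multiset V) + ↑(l'.map tgt) + {src e}
        = (↑(l'.map tgt) + {tgt e}) + {src e} := by abel
      _ = (↑(l'.map src) + {v'}) + {src e} := by rw [ih]
      _ = {src e} + ↑(l'.map src) + {v'} := by abel

lemma IsWalkA.isCycleWalk {u : V} {l : List E} (h : IsWalkA src tgt u l u) (hne : l ≠ []) :
    IsCycleWalk src tgt l := by
  refine ⟨hne, h.chain', ?_⟩
  rw [List.getLast?_eq_getLast hne, List.head?_eq_head hne]
  simp only [Option.map_some]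
  rw [h.getLast_tgt hne]
  congr 1
  obtain ⟨e, t, rfl⟩ := List.exists_cons_of_ne_nil hne
  exact (h.head_src).symm

lemma isWalkA_of_chain' {l : List E} (hne : l ≠ []) (hc : l.Chain' (fun a b => tgt a = src b)) :
    IsWalkA src tgt (src (l.head hne)) l (tgt (l.getLast hne)) := by
  induction l with
  | nil => simp at hne
  | cons e t ih =>
    rcases eq_or_ne t [] with rfl | ht
    · exact .cons rfl (.nil _)
    · rw [List.getLast_cons ht]
      refine .cons rfl ?_
      have := ih ht (hc.tail)
      have hte : tgt e = src (t.head ht) := by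
        obtain ⟨e', t', rfl⟩ := List.exists_cons_of_ne_nil ht
        exact List.isChain_cons_cons.mp hc |>.1
      rwa [← hte] at this

lemma IsCycleWalk.exists_isWalkA {l : List E} (h : IsCycleWalk src tgt l) :
    ∃ u, IsWalkA src tgt u l u ∧ l ≠ [] := by
  obtain ⟨hne, hc, hcl⟩ := h
  have := isWalkA_of_chain' (tgt := tgt) hne hc
  rw [List.getLast?_eq_getLast hne, List.head?_eq_head hne] at hcl
  simp only [Option.map_some, Option.some_inj] at hcl
  exact ⟨src (l.head hne), by rwa [hcl] at this, hne⟩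

end Walk

section Walk2
variable {src tgt : E → V}

lemma IsWalkA.suffix_from {w v u : V} {l : List E} (h : IsWalkA src tgt w l v)
    (hu : u ∈ w :: l.map tgt) :
    ∃ l₂, IsWalkA src tgt u l₂ v ∧ (u :: l₂.map tgt) <:+ (w :: l.map tgt) := by
  induction h with
  | nil u' =>
    simp only [List.map_nil, List.mem_singleton] at hu
    subst hu; exact ⟨[], .nil _, by simp⟩
  | @cons w' v' e l' hsrc hw ih =>
    rcases List.mem_cons.mp hu with rfl | hu'
    · exact ⟨e :: l', .cons hsrc hw, List.suffix_refl _⟩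
    · obtain ⟨l₂, h2, hsuf⟩ := ih (by simpa using hu')
      exact ⟨l₂, h2, hsuf.trans (by simpa using List.suffix_cons w' (tgt e :: l'.map tgt))⟩

lemma IsWalkA.exists_nodup {u v : V} {l : List E} (h : IsWalkA src tgt u l v) :
    ∃ l', IsWalkA src tgt u l' v ∧ (u :: l'.map tgt).Nodup := by
  induction h with
  | nil u' => exact ⟨[], .nil _, by simp⟩
  | @cons u' v' e l' hsrc hw ih =>
    obtain ⟨m, hm, hnd⟩ := ih
    by_cases hu : u' ∈ tgt e :: m.map tgt
    · obtain ⟨l₂, h2, hsuf⟩ := hm.suffix_from hu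
      exact ⟨l₂, h2, (hnd.sublist hsuf.sublist : _)⟩
    · exact ⟨e :: m, .cons hsrc hm, by
        simp only [List.map_cons, List.nodup_cons]
        exact ⟨hu, List.nodup_cons.mp hnd⟩⟩

lemma exists_simpleCycle_mem
    (hconn : ∀ u v : V,
      Relation.ReflTransGen (fun a b => ∃ e, src e = a ∧ tgt e = b) u v) (e : E) :
    ∃ c, IsSimpleCycle src tgt c ∧ e ∈ c := by
  obtain ⟨l0, hl0⟩ := exists_walk_of_reflTransGen (hconn (tgt e) (src e))
  obtain ⟨l, hl, hnd⟩ := hl0.exists_nodup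
  have hwalk : IsWalkA src tgt (src e) (e :: l) (src e) := .cons rfl hl
  refine ⟨e :: l, ⟨hwalk.isCycleWalk (List.cons_ne_nil _ _), ?_⟩, List.mem_cons_self⟩
  rw [List.map_cons, List.nodup_cons]
  refine ⟨?_, ?_⟩
  · rw [hl.map_src_eq]
    rcases eq_or_ne l [] with rfl | hne'
    · simp
    · have hvs : tgt e :: l.map tgt ≠ [] := by simp
      have hmt : l.map tgt ≠ [] := by simpa using hne'
      have hlast : (tgt e :: l.map tgt).getLast hvs = src e := by
        rw [List.getLast_cons hmt, List.getLast_map]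
        exact hl.getLast_tgt hne'
      have h2 := List.dropLast_append_getLast hvs
      have h3 := hnd
      rw [← h2, List.nodup_append] at h3
      intro hmem
      exact h3.2.2 _ hmem _ (by rw [hlast]; exact List.mem_singleton_self _) rfl
  · rw [hl.map_src_eq]
    exact hnd.sublist (List.dropLast_sublist _)

lemma exists_dup_decomp {α β : Type*} (g : α → β) :
    ∀ (l : List α), ¬ (l.map g).Nodup →
      ∃ (l₁ : List α) (e : α) (l₂ : List α) (e' : α) (l₃ : List α),
        l = l₁ ++ e :: (l₂ ++ e' :: l₃) ∧ g e = g e' := by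
  intro l
  induction l with
  | nil => intro h; simp at h
  | cons a t ih =>
    intro h
    rw [List.map_cons, List.nodup_cons] at h
    push_neg at h
    by_cases hmem : g a ∈ t.map g
    · obtain ⟨b, hb, hgb⟩ := List.mem_map.mp hmem
      obtain ⟨s, t', rfl⟩ := List.append_of_mem hb
      exact ⟨[], a, s, b, t', by simp, hgb.symm⟩
    · obtain ⟨l₁, e, l₂, e', l₃, rfl, hg⟩ := ih (h hmem)
      exact ⟨a :: l₁, e, l₂, e', l₃, by simp, hg⟩

lemma exists_closed_subwalk {u v : V} {l : List E} (h : IsWalkA src tgt u l v)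
    (hnd : ¬ (l.map src).Nodup) :
    ∃ (w : V) (m : List E), IsWalkA src tgt w m w ∧ m ≠ [] ∧ m.length < l.length ∧
      ∀ f ∈ m, f ∈ l := by
  obtain ⟨l₁, e, l₂, e', l₃, rfl, hg⟩ := exists_dup_decomp src l hnd
  obtain ⟨w1, _, h2⟩ := h.split
  rcases h2 with _ | ⟨hsrc, hw⟩
  obtain ⟨w2, hl2, h3⟩ := hw.split
  have hsrc' : src e' = w2 := h3.head_src
  refine ⟨w1, e :: l₂, .cons hsrc ?_, List.cons_ne_nil _ _, by simp; omega, ?_⟩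
  · rw [← hsrc, hg, hsrc']; exact hl2
  · intro f hf
    simp only [List.mem_append, List.mem_cons] at hf ⊢
    tauto

lemma exists_simpleCycle_of_closed :
    ∀ (n : ℕ) {w : V} {m : List E}, m.length ≤ n →
      IsWalkA src tgt w m w → m ≠ [] →
      ∃ c, IsSimpleCycle src tgt c ∧ ∀ f ∈ c, f ∈ m := by
  intro n
  induction n with
  | zero =>
    intro w m hlen hw hne
    exact absurd (List.length_eq_zero_iff.mp (Nat.le_zero.mp hlen)) hne
  | succ n ih =>
    intro w m hlen hw hne
    by_cases hnd : (m.map src).Nodup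
    · exact ⟨m, ⟨hw.isCycleWalk hne, hnd⟩, fun f hf => hf⟩
    · obtain ⟨w', m', hw', hne', hlt, hsub⟩ := exists_closed_subwalk hw hnd
      obtain ⟨c, hc, hcs⟩ := ih (by omega) hw' hne'
      exact ⟨c, hc, fun f hf => hsub f (hcs f hf)⟩

end Walk2

noncomputable section LinAlg

/-- Sum-of-coordinates functional. -/
def sumOver (α : Type*) [Fintype α] : (α → ℝ) →ₗ[ℝ] ℝ where
  toFun x := ∑ e, x e
  map_add' x y := by simp [Finset.sum_add_distrib]
  map_smul' r x := by simp [Finset.mul_sum]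

section D
variable [Fintype V] [Fintype E] [DecidableEq E] [DecidableEq V]

/-- The boundary (incidence) map of the multigraph. -/
def flowD (src tgt : E → V) : (E → ℝ) →ₗ[ℝ] (V → ℝ) where
  toFun x := fun v =>
    ∑ e, x e * ((if tgt e = v then (1:ℝ) else 0) - (if src e = v then 1 else 0))
  map_add' x y := by funext v; simp [add_mul, Finset.sum_add_distrib]
  map_smul' r x := by funext v; simp [Finset.mul_sum, mul_assoc]

/-- Unnormalized incidence vector of a list of edges. -/
def chi (c : List E) : E → ℝ := fun e => (c.count e : ℝ)

lemma sum_count_mul (c : List E) (g : E → ℝ) :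
    ∑ e : E, (c.count e : ℝ) * g e = (c.map g).sum := by
  induction c with
  | nil => simp
  | cons a t ih =>
    have h : ∀ e : E, ((a :: t).count e : ℝ) * g e
        = (t.count e : ℝ) * g e + (if a = e then g e else 0) := by
      intro e
      rw [List.count_cons]
      push_cast
      by_cases h : a = e <;> simp [h] <;> ring
    rw [Finset.sum_congr rfl (fun e _ => h e), Finset.sum_add_distrib, ih,
      Finset.sum_ite_eq Finset.univ a g]
    simp [add_comm]

lemma sum_map_indicator (f : E → V) (v : V) (c : List E) :
    (c.map (fun e => if f e = v then (1:ℝ) else 0)).sum = ((c.map f).count v : ℝ) := by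
  induction c with
  | nil => simp
  | cons a t ih =>
    simp only [List.map_cons, List.sum_cons, List.count_cons, ih]
    push_cast
    by_cases h : f a = v <;> simp [h, add_comm]

variable {src tgt : E → V}

lemma flowD_chi_walk {a b : V} {l : List E} (h : IsWalkA src tgt a l b) :
    flowD src tgt (chi l) = Pi.single b 1 - Pi.single a 1 := by
  funext v
  have hms := h.multiset_eq
  have hcount : ((l.map tgt).count v : ℝ) + (if a = v then (1:ℝ) else 0)
      = ((l.map src).count v : ℝ) + (if b = v then 1 else 0) := by
    have := congrArg (Multiset.count v) hms
    simp only [Multiset.count_add, Multiset.coe_count, Multiset.count_singleton] at this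
    push_cast [this]
    by_cases ha : a = v <;> by_cases hb : b = v <;>
      simp [ha, hb, eq_comm] at this ⊢ <;> push_cast [this] <;> ring_nf <;> omega
  have e1 := sum_count_mul l (fun e => if tgt e = v then (1:ℝ) else 0)
  have e2 := sum_count_mul l (fun e => if src e = v then (1:ℝ) else 0)
  have e3 := sum_map_indicator tgt v l
  have e4 := sum_map_indicator src v l
  show ∑ e, (l.count e : ℝ) * ((if tgt e = v then (1:ℝ) else 0) - (if src e = v then 1 else 0))
      = _
  simp only [mul_sub, Finset.sum_sub_distrib, e1, e2, e3, e4]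
  have hb1 : (Pi.single b 1 : V → ℝ) v = if b = v then 1 else 0 := by
    simp [Pi.single_apply, eq_comm]
  have ha1 : (Pi.single a 1 : V → ℝ) v = if a = v then 1 else 0 := by
    simp [Pi.single_apply, eq_comm]
  simp only [Pi.sub_apply, hb1, ha1]
  linarith [hcount]

lemma flowD_chi_cycle {c : List E} (h : IsCycleWalk src tgt c) :
    flowD src tgt (chi c) = 0 := by
  obtain ⟨u, hw, _⟩ := h.exists_isWalkA
  rw [flowD_chi_walk hw, sub_self]

lemma chi_eq_length_smul_cycleVec {c : List E} (hne : c ≠ []) :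
    chi c = (c.length : ℝ) • cycleVec c := by
  funext e
  have : (c.length : ℝ) ≠ 0 := by
    simpa using List.length_pos_iff.mpr hne |>.ne'
  simp [chi, cycleVec, Pi.smul_apply, smul_eq_mul]
  field_simp

lemma flowD_cycleVec {c : List E} (h : IsCycleWalk src tgt c) :
    flowD src tgt (cycleVec c) = 0 := by
  have hne := h.1
  have hlen : (c.length : ℝ) ≠ 0 := by
    simpa using List.length_pos_iff.mpr hne |>.ne'
  have := flowD_chi_cycle h
  rw [chi_eq_length_smul_cycleVec hne, map_smul] at this
  simpa [smul_eq_zero, hlen] using this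

lemma sumOver_cycleVec {c : List E} (hne : c ≠ []) :
    sumOver E (cycleVec c) = 1 := by
  have hlen : (c.length : ℝ) ≠ 0 := by
    simpa using List.length_pos_iff.mpr hne |>.ne'
  show ∑ e, cycleVec c e = 1
  have h1 : ∑ e : E, (c.count e : ℝ) = (c.length : ℝ) := by
    have := sum_count_mul c (fun _ => (1:ℝ))
    simpa using this
  simp only [cycleVec, div_eq_inv_mul, ← Finset.mul_sum]
  rw [h1]
  exact inv_mul_cancel₀ hlen

end D
end LinAlg

section FD
variable [Fintype V] [Fintype E] [DecidableEq E] [DecidableEq V]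
variable {src tgt : E → V}

lemma succ_prop {x : E → ℝ} (hker : flowD src tgt x = 0) (hpos : ∀ e, 0 ≤ x e)
    {w : V} (h : ∃ f, 0 < x f ∧ tgt f = w) : ∃ g, 0 < x g ∧ src g = w := by
  obtain ⟨f, hf, hfw⟩ := h
  have h0 : ∑ e, x e * ((if tgt e = w then (1:ℝ) else 0) - (if src e = w then 1 else 0))
      = (0:ℝ) := congrFun hker w
  have hAB : ∑ e, x e * (if tgt e = w then (1:ℝ) else 0)
      = ∑ e, x e * (if src e = w then (1:ℝ) else 0) := by
    rw [Finset.sum_congr rfl (fun e _ => mul_sub (x e) _ _), Finset.sum_sub_distrib,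
      sub_eq_zero] at h0
    exact h0
  have hA : 0 < ∑ e, x e * (if tgt e = w then (1:ℝ) else 0) := by
    have hle := Finset.single_le_sum
      (f := fun e => x e * (if tgt e = w then (1:ℝ) else 0))
      (fun e _ => mul_nonneg (hpos e) (by split <;> norm_num)) (Finset.mem_univ f)
    refine lt_of_lt_of_le hf ?_
    calc x f = x f * (if tgt f = w then (1:ℝ) else 0) := by rw [hfw, if_pos rfl, mul_one]
      _ ≤ _ := hle
  rw [hAB] at hA
  obtain ⟨g, -, hg⟩ := Finset.exists_ne_zero_of_sum_ne_zero hA.ne'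
  by_cases hsg : src g = w
  · refine ⟨g, ?_, hsg⟩
    rcases lt_or_eq_of_le (hpos g) with h | h
    · exact h
    · exact absurd (by rw [← h]; ring) hg
  · exact absurd (by rw [if_neg hsg, mul_zero]) hg

lemma flow_decomp : ∀ (n : ℕ) (x : E → ℝ),
    (Finset.univ.filter (fun e => x e ≠ 0)).card ≤ n →
    flowD src tgt x = 0 → (∀ e, 0 ≤ x e) →
    x ∈ Submodule.span ℝ {y : E → ℝ | ∃ c, IsSimpleCycle src tgt c ∧ y = cycleVec c} := by
  intro n
  induction n with
  | zero =>
    intro x hcard hker hpos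
    have hx : x = 0 := by
      funext e
      show x e = (0:ℝ)
      by_contra he
      have hmem : e ∈ Finset.univ.filter (fun e => x e ≠ 0) := by simp [he]
      have := Finset.card_pos.mpr ⟨e, hmem⟩
      omega
    simp [hx]
  | succ n ih =>
    intro x hcard hker hpos
    by_cases hx : x = 0
    · simp [hx]
    have he₀ : ∃ e, 0 < x e := by
      by_contra h
      push_neg at h
      exact hx (funext fun e => le_antisymm (h e) (hpos e))
    obtain ⟨e₀, he₀⟩ := he₀
    have step : ∀ m : ℕ, ∃ (l : List E) (w : V) (f : E),
        IsWalkA src tgt (src e₀) l w ∧ l.length = m + 1 ∧ (∀ g ∈ l, 0 < x g) ∧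
        f ∈ l ∧ tgt f = w ∧ 0 < x f := by
      intro m
      induction m with
      | zero =>
        exact ⟨[e₀], tgt e₀, e₀, .cons rfl (.nil _), rfl, by simpa using he₀, by simp,
          rfl, he₀⟩
      | succ m ihm =>
        obtain ⟨l, w, f, hw, hlen, hposl, hf, hfw, hxf⟩ := ihm
        obtain ⟨g, hg, hgsrc⟩ := succ_prop hker hpos ⟨f, hxf, hfw⟩
        refine ⟨l ++ [g], tgt g, g, hw.append (.cons hgsrc (.nil _)), by simp [hlen], ?_,
          by simp, rfl, hg⟩
        intro g' hg'
        rcases List.mem_append.mp hg' with h | h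
        · exact hposl g' h
        · simp only [List.mem_singleton] at h; subst h; exact hg
    obtain ⟨l, w, f, hw, hlen, hposl, -, -, -⟩ := step (Fintype.card V)
    have hnd : ¬ (l.map src).Nodup := by
      intro hnd
      have := hnd.length_le_card
      simp [hlen] at this
    obtain ⟨w', m, hwm, hmne, -, hsub⟩ := exists_closed_subwalk hw hnd
    obtain ⟨c, hc, hcs⟩ := exists_simpleCycle_of_closed m.length le_rfl hwm hmne
    have hcne : c ≠ [] := hc.1.1
    have hcpos : ∀ g ∈ c, 0 < x g := fun g hg => hposl g (hsub g (hcs g hg))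
    obtain ⟨e', he'c, he'min⟩ := Finset.exists_min_image c.toFinset x (by
      obtain ⟨a, t, rfl⟩ := List.exists_cons_of_ne_nil hcne
      exact ⟨a, by simp⟩)
    rw [List.mem_toFinset] at he'c
    have htpos : 0 < x e' := hcpos e' he'c
    have hcnd : c.Nodup := List.Nodup.of_map src hc.2
    have hchi : ∀ e, chi c e = if e ∈ c then (1:ℝ) else 0 := by
      intro e
      by_cases hmem : e ∈ c
      · simp [chi, List.count_eq_one_of_mem hcnd hmem, hmem]
      · simp [chi, List.count_eq_zero_of_not_mem hmem, hmem]
    set y : E → ℝ := x - (x e') • chi c with hy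
    have hypos : ∀ e, 0 ≤ y e := by
      intro e
      simp only [hy, Pi.sub_apply, Pi.smul_apply, smul_eq_mul, hchi e]
      by_cases hmem : e ∈ c
      · have := he'min e (List.mem_toFinset.mpr hmem)
        simp only [if_pos hmem, mul_one]
        linarith
      · simp [hmem, hpos e]
    have hyker : flowD src tgt y = 0 := by
      rw [hy, map_sub, map_smul, hker, flowD_chi_cycle hc.1]
      simp
    have hsupp : Finset.univ.filter (fun e => y e ≠ 0)
        ⊂ Finset.univ.filter (fun e => x e ≠ 0) := by
      have hss : Finset.univ.filter (fun e => y e ≠ 0)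
          ⊆ Finset.univ.filter (fun e => x e ≠ 0) := by
        intro e he
        simp only [Finset.mem_filter, Finset.mem_univ, true_and] at he ⊢
        intro hxe
        have hmem : e ∉ c := fun hmem => (hcpos e hmem).ne' hxe
        apply he
        simp [hy, hxe, hchi e, hmem]
      rw [Finset.ssubset_iff_of_subset hss]
      refine ⟨e', by simp [htpos.ne'], ?_⟩
      simp [hy, hchi e', he'c]
    have hmem := ih y (by have := Finset.card_lt_card hsupp; omega) hyker hypos
    have hxy : x = y + (x e') • chi c := by rw [hy]; abel
    rw [hxy]
    refine Submodule.add_mem _ hmem ?_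
    rw [chi_eq_length_smul_cycleVec hcne, smul_smul]
    exact Submodule.smul_mem _ _ (Submodule.subset_span ⟨c, hc, rfl⟩)

lemma ker_le_span
    (hconn : ∀ u v : V,
      Relation.ReflTransGen (fun a b => ∃ e, src e = a ∧ tgt e = b) u v)
    {y : E → ℝ} (hker : flowD src tgt y = 0) :
    y ∈ Submodule.span ℝ {z : E → ℝ | ∃ c, IsSimpleCycle src tgt c ∧ z = cycleVec c} := by
  choose cyc hcyc hcycmem using fun e => exists_simpleCycle_mem hconn e
  set p : E → ℝ := ∑ e : E, chi (cyc e) with hp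
  have hpapp : ∀ e, p e = ∑ e' : E, chi (cyc e') e := by
    intro e; rw [hp]; simp [Finset.sum_apply]
  have hpker : flowD src tgt p = 0 := by
    rw [hp, map_sum]
    exact Finset.sum_eq_zero fun e _ => flowD_chi_cycle (hcyc e).1
  have hpone : ∀ e, 1 ≤ p e := by
    intro e
    have h1 : (1:ℝ) ≤ chi (cyc e) e := by
      have hne : (cyc e).count e ≠ 0 := by
        simp only [ne_eq, List.count_eq_zero]
        exact fun h => h (hcycmem e)
      show (1:ℝ) ≤ ((cyc e).count e : ℝ)
      exact_mod_cast Nat.one_le_iff_ne_zero.mpr hne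
    have h2 : chi (cyc e) e ≤ ∑ e' : E, chi (cyc e') e :=
      Finset.single_le_sum (f := fun e' => chi (cyc e') e)
        (fun e' _ => by simp [chi]) (Finset.mem_univ e)
    rw [hpapp e]
    linarith
  set M : ℝ := ∑ e' : E, |y e'| with hM
  have hMy : ∀ e, |y e| ≤ M := fun e =>
    Finset.single_le_sum (f := fun e' => |y e'|) (fun _ _ => abs_nonneg _) (Finset.mem_univ e)
  have hM0 : 0 ≤ M := Finset.sum_nonneg fun _ _ => abs_nonneg _
  set x : E → ℝ := y + M • p with hx
  have hxpos : ∀ e, 0 ≤ x e := by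
    intro e
    have h1 : M * 1 ≤ M * p e := mul_le_mul_of_nonneg_left (hpone e) hM0
    have h2 : -y e ≤ |y e| := neg_le_abs _
    have h3 := hMy e
    simp only [hx, Pi.add_apply, Pi.smul_apply, smul_eq_mul]
    nlinarith
  have hxker : flowD src tgt x = 0 := by
    rw [hx, map_add, map_smul, hker, hpker]
    simp
  have hxspan := flow_decomp _ x le_rfl hxker hxpos
  have hpspan : p ∈ Submodule.span ℝ
      {z : E → ℝ | ∃ c, IsSimpleCycle src tgt c ∧ z = cycleVec c} := by
    rw [hp]
    refine Submodule.sum_mem _ fun e _ => ?_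
    rw [chi_eq_length_smul_cycleVec (hcyc e).1.1]
    exact Submodule.smul_mem _ _ (Submodule.subset_span ⟨cyc e, hcyc e, rfl⟩)
  have hyx : y = x - M • p := by rw [hx]; abel
  rw [hyx]
  exact Submodule.sub_mem _ hxspan (Submodule.smul_mem _ _ hpspan)

end FD

section Final
variable [Fintype V] [Fintype E] [DecidableEq E] [DecidableEq V]
variable {src tgt : E → V}

lemma range_flowD_eq
    (hconn : ∀ u v : V,
      Relation.ReflTransGen (fun a b => ∃ e, src e = a ∧ tgt e = b) u v)
    (hV : Nonempty V) :
    LinearMap.range (flowD src tgt) = LinearMap.ker (sumOver V) := by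
  obtain ⟨v₀⟩ := hV
  apply le_antisymm
  · rintro _ ⟨x, rfl⟩
    rw [LinearMap.mem_ker]
    show ∑ v, ∑ e, x e * ((if tgt e = v then (1:ℝ) else 0) - (if src e = v then 1 else 0))
      = 0
    rw [Finset.sum_comm]
    refine Finset.sum_eq_zero fun e _ => ?_
    have h : ∑ v, ((if tgt e = v then (1:ℝ) else 0) - (if src e = v then 1 else 0)) = 0 := by
      rw [Finset.sum_sub_distrib,
        Finset.sum_ite_eq Finset.univ (tgt e) (fun _ => (1:ℝ)),
        Finset.sum_ite_eq Finset.univ (src e) (fun _ => (1:ℝ))]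
      simp
    rw [← Finset.mul_sum, h, mul_zero]
  · intro y hy
    rw [LinearMap.mem_ker] at hy
    have hy' : ∑ v, y v = 0 := hy
    have hδ : ∀ v : V,
        (Pi.single v 1 - Pi.single v₀ 1 : V → ℝ) ∈ LinearMap.range (flowD src tgt) := by
      intro v
      obtain ⟨l, hl⟩ := exists_walk_of_reflTransGen (hconn v₀ v)
      exact ⟨chi l, flowD_chi_walk hl⟩
    have hyrep : y = ∑ v, y v • (Pi.single v 1 - Pi.single v₀ 1 : V → ℝ) := by
      funext w
      simp only [Finset.sum_apply, Pi.smul_apply, Pi.sub_apply, smul_eq_mul]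
      have h1 : ∀ v : V, (Pi.single v 1 : V → ℝ) w = if w = v then 1 else 0 := fun v => by
        rw [Pi.single_apply]
      simp only [h1, mul_sub]
      rw [Finset.sum_sub_distrib]
      have h2 : ∑ v, y v * (if w = v then (1:ℝ) else 0) = y w := by
        simp only [mul_ite, mul_one, mul_zero]
        rw [Finset.sum_ite_eq Finset.univ w y]
        simp
      have h3 : ∑ v, y v * (if w = v₀ then (1:ℝ) else 0) = 0 := by
        rw [← Finset.sum_mul, hy', zero_mul]
      rw [h2, h3, sub_zero]
    rw [hyrep]
    exact Submodule.sum_mem _ fun v _ => Submodule.smul_mem _ _ (hδ v)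

set_option synthInstance.maxHeartbeats 1000000 in
theorem cyclePolytope_dim_aux (src tgt : E → V)
    (hconn : ∀ u v : V,
      Relation.ReflTransGen (fun a b => ∃ e, src e = a ∧ tgt e = b) u v)
    (hE : Nonempty E) :
    Module.finrank ℝ (vectorSpan ℝ (cyclePolytope src tgt))
      = Fintype.card E - Fintype.card V := by
  obtain ⟨e₀⟩ := hE
  have hV : Nonempty V := ⟨src e₀⟩
  obtain ⟨v₀⟩ := hV
  haveI : Nonempty V := ⟨v₀⟩
  set S : Set (E → ℝ) := { x | ∃ c, IsSimpleCycle src tgt c ∧ x = cycleVec c } with hS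
  -- fixed cycle
  obtain ⟨c₀, hc₀, -⟩ := exists_simpleCycle_mem hconn e₀
  have hc₀ne : c₀ ≠ [] := hc₀.1.1
  -- vectorSpan of polytope = vectorSpan of S
  have hVS : vectorSpan ℝ (cyclePolytope src tgt) = vectorSpan ℝ S := by
    rw [← direction_affineSpan, ← direction_affineSpan]
    rw [show cyclePolytope src tgt = convexHull ℝ S from rfl, affineSpan_convexHull]
  set K : Submodule ℝ (E → ℝ) :=
    LinearMap.ker (flowD src tgt) ⊓ LinearMap.ker (sumOver E) with hK
  -- vectorSpan S = K
  have hSinK : ∀ x ∈ S, flowD src tgt x = 0 ∧ sumOver E x = 1 := by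
    rintro x ⟨c, hc, rfl⟩
    exact ⟨flowD_cycleVec hc.1, sumOver_cycleVec hc.1.1⟩
  have hspan : vectorSpan ℝ S = K := by
    apply le_antisymm
    · rw [vectorSpan_def]
      refine Submodule.span_le.mpr ?_
      rintro z ⟨x, hx, y, hy, rfl⟩
      obtain ⟨hx1, hx2⟩ := hSinK x hx
      obtain ⟨hy1, hy2⟩ := hSinK y hy
      show x -ᵥ y ∈ K
      rw [Submodule.mem_inf]
      constructor
      · rw [LinearMap.mem_ker, vsub_eq_sub, map_sub, hx1, hy1, sub_zero]
      · rw [LinearMap.mem_ker, vsub_eq_sub, map_sub, hx2, hy2, sub_self]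
    · intro y hy
      obtain ⟨hy1, hy2⟩ := Submodule.mem_inf.mp hy
      rw [LinearMap.mem_ker] at hy1 hy2
      have hyspan := ker_le_span hconn hy1
      obtain ⟨co, hcosupp, hcosum⟩ := Submodule.mem_span_set.mp hyspan
      have hcosum' : y = ∑ s ∈ co.support, co s • s := by
        rw [← hcosum]; rfl
      have hwt : ∑ s ∈ co.support, co s = 0 := by
        have h0 : sumOver E y = 0 := hy2
        rw [hcosum', map_sum] at h0
        rw [← h0]
        refine Finset.sum_congr rfl fun s hs => ?_
        have hsS : s ∈ S := hcosupp hs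
        rw [map_smul, smul_eq_mul, (hSinK s hsS).2, mul_one]
      rcases co.support.eq_empty_or_nonempty with hemp | ⟨s₀, hs₀⟩
      · rw [hcosum', hemp, Finset.sum_empty]
        exact Submodule.zero_mem _
      · have hs₀S : s₀ ∈ S := hcosupp hs₀
        have hrep : y = ∑ s ∈ co.support, co s • (s - s₀) := by
          rw [Finset.sum_congr rfl (fun s _ => smul_sub (co s) s s₀),
            Finset.sum_sub_distrib, ← Finset.sum_smul, hwt, zero_smul, sub_zero, ← hcosum']
        rw [hrep]
        refine Submodule.sum_mem _ fun s hs => Submodule.smul_mem _ _ ?_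
        have : s -ᵥ s₀ ∈ vectorSpan ℝ S := vsub_mem_vectorSpan ℝ (hcosupp hs) hs₀S
        rwa [vsub_eq_sub] at this
  -- rank computation
  have hrange := range_flowD_eq hconn ⟨v₀⟩
  have hsurjV : Function.Surjective (sumOver V) := by
    intro r
    refine ⟨fun _ => r / (Fintype.card V : ℝ), ?_⟩
    have hcard : (Fintype.card V : ℝ) ≠ 0 := by
      have := Fintype.card_pos (α := V)
      positivity
    show ∑ _v : V, r / (Fintype.card V : ℝ) = r
    rw [Finset.sum_const, Finset.card_univ, nsmul_eq_mul]
    field_simp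
  have h1 : Module.finrank ℝ (LinearMap.ker (sumOver V)) + 1 = Fintype.card V := by
    have h := LinearMap.finrank_range_add_finrank_ker (sumOver V)
    rw [LinearMap.range_eq_top.mpr hsurjV, finrank_top, Module.finrank_self,
      Module.finrank_fintype_fun_eq_card] at h
    omega
  have h2 := LinearMap.finrank_range_add_finrank_ker (flowD src tgt)
  rw [hrange, Module.finrank_fintype_fun_eq_card] at h2
  -- restrict sumOver E to ker flowD
  set g := (sumOver E).domRestrict (LinearMap.ker (flowD src tgt)) with hg
  have hx₀ : cycleVec c₀ ∈ LinearMap.ker (flowD src tgt) := by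
    rw [LinearMap.mem_ker]; exact flowD_cycleVec hc₀.1
  have hgsurj : Function.Surjective g := by
    intro r
    refine ⟨r • ⟨cycleVec c₀, hx₀⟩, ?_⟩
    show sumOver E (r • cycleVec c₀) = r
    rw [map_smul, sumOver_cycleVec hc₀ne, smul_eq_mul, mul_one]
  have h3 : 1 + Module.finrank ℝ (LinearMap.ker g)
      = Module.finrank ℝ (LinearMap.ker (flowD src tgt)) := by
    have h := LinearMap.finrank_range_add_finrank_ker g
    rw [LinearMap.range_eq_top.mpr hgsurj, finrank_top, Module.finrank_self] at h
    exact h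
  have hkerg : Module.finrank ℝ (LinearMap.ker g) = Module.finrank ℝ K := by
    have hle : K ≤ LinearMap.ker (flowD src tgt) := inf_le_left
    have heq : LinearMap.ker g
        = Submodule.comap (LinearMap.ker (flowD src tgt)).subtype K := by
      ext z
      simp only [hg, LinearMap.mem_ker, LinearMap.domRestrict_apply, Submodule.mem_comap,
        Submodule.coe_subtype, hK, Submodule.mem_inf]
      exact ⟨fun h => ⟨z.2, h⟩, fun h => h.2⟩
    rw [heq]
    exact (Submodule.comapSubtypeEquivOfLe hle).finrank_eq
  have hVpos : 0 < Fintype.card V := Fintype.card_pos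
  rw [hVS, hspan]
  omega

end Final

/-- If a finite directed multigraph is strongly connected and has at least one edge, then its
cycle polytope has dimension `|E| − |V|` (dimension = rank of the direction of the affine
hull). -/
theorem cyclePolytope_dim_stronglyConnected
    [Fintype V] [Fintype E] [DecidableEq E] (src tgt : E → V)
    (hconn : ∀ u v : V,
      Relation.ReflTransGen (fun a b => ∃ e, src e = a ∧ tgt e = b) u v)
    (hE : Nonempty E) :
    Module.finrank ℝ (vectorSpan ℝ (cyclePolytope src tgt))
      = Fintype.card E - Fintype.card V := by
  classical
  exact cyclePolytope_dim_aux src tgt hconn hE
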